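/- arXiv:1005.2249 — 3 statements merged into one kernel-verified Lean document; each statement's English description precedes it below -/
import Mathlib

section
/- If Q(x̄) ≤ inf_{‖x‖₀ ≤ ‖x̄‖₀ + s} Q(x) + ε̄ and Q has restricted upper strong convexity constant ρ₊(s), then the restricted gradient optimal constant satisfies ε_s(x̄) ≤ 2·√(ρ₊(s)·ε̄). -/
open scoped Classical

/-- `‖u‖₀`: number of nonzero coordinates. -/
noncomputable def l0 {d : ℕ} (u : Fin d → ℝ) : ℕ :=
  (Finset.univ.filter fun i => u i ≠ 0).card

/-- `‖u‖₂`: the Euclidean norm. -/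
noncomputable def l2 {d : ℕ} (u : Fin d → ℝ) : ℝ :=
  Real.sqrt (∑ i, u i ^ 2)

lemma l0_smul_le {d : ℕ} (c : ℝ) (u : Fin d → ℝ) : l0 (c • u) ≤ l0 u := by
  apply Finset.card_le_card
  intro i hi
  simp only [Finset.mem_filter, Pi.smul_apply, smul_eq_mul] at *
  exact ⟨hi.1, fun h => hi.2 (by rw [h, mul_zero])⟩

lemma l0_add_le {d : ℕ} (u v : Fin d → ℝ) : l0 (u + v) ≤ l0 u + l0 v := by
  classical
  unfold l0
  calc (Finset.univ.filter fun i => (u + v) i ≠ 0).card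
      ≤ ((Finset.univ.filter fun i => u i ≠ 0) ∪ (Finset.univ.filter fun i => v i ≠ 0)).card := by
        apply Finset.card_le_card
        intro i hi
        simp only [Finset.mem_filter, Finset.mem_union, Pi.add_apply, Finset.mem_univ,
          true_and] at *
        by_contra h
        push_neg at h
        exact hi (by rw [h.1, h.2, add_zero])
    _ ≤ _ := Finset.card_union_le _ _

lemma l2_smul {d : ℕ} (c : ℝ) (u : Fin d → ℝ) : l2 (c • u) = |c| * l2 u := by
  unfold l2
  rw [← Real.sqrt_sq_eq_abs, ← Real.sqrt_mul (sq_nonneg c)]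
  congr 1
  rw [Finset.mul_sum]
  exact Finset.sum_congr rfl fun i _ => by simp [mul_pow]

/-- If `Q(x̄) ≤ inf_{‖x‖₀ ≤ ‖x̄‖₀ + s} Q(x) + ε̄` and `Q` has restricted upper strong
convexity constant `ρ₊(s)`, then the restricted gradient optimal constant satisfies
`ε_s(x̄) ≤ 2√(ρ₊(s)·ε̄)`. -/
theorem stmt2 (d s : ℕ) (hs : 0 < s) (Q : (Fin d → ℝ) → ℝ)
    (hQ : Differentiable ℝ Q) (xbar : Fin d → ℝ)
    (ρp : ℝ) (hρp : 0 < ρp)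
    (hupper : ∀ x x' : Fin d → ℝ, l0 (x - x') ≤ s →
      Q x' - Q x - fderiv ℝ Q x (x' - x) ≤ ρp * (l2 (x - x')) ^ 2)
    (εbar : ℝ) (hεbar : 0 ≤ εbar)
    (hopt : ∀ x : Fin d → ℝ, l0 x ≤ l0 xbar + s → Q xbar ≤ Q x + εbar)
    (ε : ℝ)
    (hε : IsLeast {c : ℝ | 0 ≤ c ∧
      ∀ u : Fin d → ℝ, l0 u ≤ s → |fderiv ℝ Q xbar u| ≤ c * l2 u} ε) :
    ε ≤ 2 * Real.sqrt (ρp * εbar) := by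
  set r := Real.sqrt (ρp * εbar) with hr
  have hr0 : 0 ≤ r := Real.sqrt_nonneg _
  have hrsq : r ^ 2 = ρp * εbar := Real.sq_sqrt (by positivity)
  apply hε.2
  refine ⟨by positivity, ?_⟩
  intro u hu
  set g := fderiv ℝ Q xbar u with hg
  set a := l2 u with ha
  have ha0 : 0 ≤ a := Real.sqrt_nonneg _
  rcases eq_or_lt_of_le ha0 with haz | hapos
  · -- a = 0 forces u = 0
    have hsum : ∑ i, u i ^ 2 = 0 := by
      have h1 := Real.sqrt_eq_zero'.mp haz.symm
      have h0 : (0:ℝ) ≤ ∑ i, u i ^ 2 := Finset.sum_nonneg fun i _ => sq_nonneg _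
      linarith
    have hu0 : u = 0 := by
      funext i
      have := (Finset.sum_eq_zero_iff_of_nonneg (fun i _ => sq_nonneg (u i))).mp hsum i
        (Finset.mem_univ i)
      exact pow_eq_zero_iff (by norm_num) |>.mp this
    simp [hg, hu0, ← haz]
  · -- key inequality: for all t, -(t*g) ≤ ρp * t^2 * a^2 + εbar
    have key : ∀ t : ℝ, -(t * g) ≤ ρp * t ^ 2 * a ^ 2 + εbar := by
      intro t
      have hl0 : l0 (xbar - (xbar + t • u)) ≤ s := by
        have h : xbar - (xbar + t • u) = (-t) • u := by
          funext i; simp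
        rw [h]
        exact le_trans (l0_smul_le _ _) hu
      have h1 := hupper xbar (xbar + t • u) hl0
      have hl0' : l0 (xbar + t • u) ≤ l0 xbar + s := by
        exact le_trans (l0_add_le _ _) (by
          have := le_trans (l0_smul_le t u) hu
          omega)
      have h2 := hopt (xbar + t • u) hl0'
      have hd : (xbar + t • u) - xbar = t • u := by
        funext i; simp
      have hmap : fderiv ℝ Q xbar ((xbar + t • u) - xbar) = t * g := by
        rw [hd, map_smul]; rfl
      have hl2 : l2 (xbar - (xbar + t • u)) = |t| * a := by
        have h : xbar - (xbar + t • u) = (-t) • u := by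
          funext i; simp
        rw [h, l2_smul, abs_neg, ha]
      rw [hmap, hl2] at h1
      have habs : (|t| * a) ^ 2 = t ^ 2 * a ^ 2 := by
        rw [mul_pow, sq_abs]
      rw [habs] at h1
      nlinarith [h1, h2]
    -- plug optimal t
    have hkey := key (-g / (2 * ρp * a ^ 2))
    have hane : a ≠ 0 := ne_of_gt hapos
    have hgsq : g ^ 2 ≤ 4 * ρp * εbar * a ^ 2 := by
      have hc : (0:ℝ) < 2 * ρp * a ^ 2 := by positivity
      have h4 : (0:ℝ) < 4 * ρp * a ^ 2 := by positivity
      have e1 : -((-g / (2 * ρp * a ^ 2)) * g) = 2 * (g ^ 2 / (4 * ρp * a ^ 2)) := by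
        field_simp; ring
      have e2 : ρp * (-g / (2 * ρp * a ^ 2)) ^ 2 * a ^ 2 = g ^ 2 / (4 * ρp * a ^ 2) := by
        field_simp; ring
      rw [e1, e2] at hkey
      have hX : g ^ 2 / (4 * ρp * a ^ 2) ≤ εbar := by linarith
      have := (div_le_iff₀ h4).mp hX
      nlinarith [this]
    -- conclude |g| ≤ 2 r a
    nlinarith [sq_abs g, abs_nonneg g, hgsq, hrsq, mul_nonneg hr0 ha0,
      sq_nonneg (2 * r * a - |g|), mul_pos (mul_pos two_pos hρp) (mul_pos hapos hapos)]
end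

section
/- Let F, F̄ ⊂ {1,…,d}, supp(x̄) ⊂ F̄, and x = argmin{Q(z) : supp(z) ⊂ F}. Then for all s ≥ |F̄ \ F|: Q(x) − Q(x̄) ≤ 1.5·ρ₊(s)·‖x̄_{F̄\F}‖₂² + 0.5·ε_s(x̄)²/ρ₊(s). -/
open scoped Classical

/-- Lemma 1 of the paper: if `supp(x̄) ⊂ F̄` and `x` minimizes `Q` over vectors supported
on `F`, then for all `s ≥ |F̄ \ F|`:
`Q(x) − Q(x̄) ≤ 1.5·ρ₊(s)·‖x̄_{F̄\F}‖₂² + 0.5·ε_s(x̄)²/ρ₊(s)`. -/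
theorem stmt4 (d s : ℕ) (Q : (Fin d → ℝ) → ℝ)
    (hQ : Differentiable ℝ Q) (hconv : ConvexOn ℝ Set.univ Q)
    (F Fbar : Finset (Fin d)) (xbar x : Fin d → ℝ)
    (hsupp : ∀ i ∉ Fbar, xbar i = 0)
    (hxF : ∀ i ∉ F, x i = 0)
    (hxmin : ∀ z : Fin d → ℝ, (∀ i ∉ F, z i = 0) → Q x ≤ Q z)
    (ρp : ℝ) (hρp : 0 < ρp)
    (hupper : ∀ u v : Fin d → ℝ, l0 (u - v) ≤ s →
      Q v - Q u - fderiv ℝ Q u (v - u) ≤ ρp * (l2 (u - v)) ^ 2)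
    (ε : ℝ) (hεnn : 0 ≤ ε)
    (hε : ∀ u : Fin d → ℝ, l0 u ≤ s → |fderiv ℝ Q xbar u| ≤ ε * l2 u)
    (hscard : (Fbar \ F).card ≤ s) :
    Q x - Q xbar ≤ 1.5 * ρp * (∑ i ∈ Fbar \ F, xbar i ^ 2) + 0.5 * ε ^ 2 / ρp := by
  set u : Fin d → ℝ := fun i => if i ∈ Fbar \ F then xbar i else 0 with hu
  set x' : Fin d → ℝ := xbar - u with hx'
  have hsub : xbar - x' = u := by simp [hx']
  have hl0 : l0 u ≤ s := by
    refine le_trans ?_ hscard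
    apply Finset.card_le_card
    intro i hi
    simp only [Finset.mem_filter, hu] at hi
    by_contra h
    exact hi.2 (by simp [h])
  have hx'F : ∀ i ∉ F, x' i = 0 := by
    intro i hiF
    by_cases hiFb : i ∈ Fbar
    · simp [hx', hu, Finset.mem_sdiff, hiFb, hiF]
    · simp [hx', hu, Finset.mem_sdiff, hiFb, hsupp i hiFb]
  have h1 : Q x ≤ Q x' := hxmin x' hx'F
  have h2 := hupper xbar x' (by rw [hsub]; exact hl0)
  rw [hsub] at h2
  have hder : fderiv ℝ Q xbar (x' - xbar) = - fderiv ℝ Q xbar u := by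
    have : x' - xbar = -u := by simp [hx']
    rw [this, map_neg]
  have h3 := hε u hl0
  have hL : l2 u ^ 2 = ∑ i ∈ Fbar \ F, xbar i ^ 2 := by
    rw [l2, Real.sq_sqrt (Finset.sum_nonneg fun i _ => sq_nonneg _)]
    rw [← Finset.sum_subset (Finset.subset_univ (Fbar \ F))
      (fun i _ hi => by simp only [hu]; rw [if_neg hi]; ring)]
    exact Finset.sum_congr rfl fun i hi => by simp only [hu]; rw [if_pos hi]
  have hLnn : 0 ≤ l2 u := Real.sqrt_nonneg _
  have habs : |fderiv ℝ Q xbar u| ≤ ε * l2 u := h3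
  have hAMGM : ε * l2 u ≤ 0.5 * ρp * (l2 u) ^ 2 + 0.5 * ε ^ 2 / ρp := by
    rw [← sub_nonneg]
    have heq : 0.5 * ρp * (l2 u) ^ 2 + 0.5 * ε ^ 2 / ρp - ε * l2 u
        = (ρp * l2 u - ε) ^ 2 / (2 * ρp) := by
      field_simp; ring
    rw [heq]; positivity
  have := abs_le.mp habs
  rw [← hL]
  rw [hder] at h2
  nlinarith
end

section
/- Let F, F̄ ⊂ {1,…,d}, supp(x̄) ⊂ F̄, and x = argmin{Q(z) : supp(z) ⊂ F}. Then for all s ≥ |F ∪ F̄|: ρ₋(s)·‖x − x̄‖₂² ≤ 2·[Q(x) − Q(x̄)] + ε_s(x̄)²/ρ₋(s). -/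
open scoped Classical

/-- Lemma 2 of the paper: if `supp(x̄) ⊂ F̄` and `x` minimizes `Q` over vectors supported
on `F`, then for all `s ≥ |F ∪ F̄|`:
`ρ₋(s)·‖x − x̄‖₂² ≤ 2[Q(x) − Q(x̄)] + ε_s(x̄)²/ρ₋(s)`. -/
theorem stmt5 (d s : ℕ) (Q : (Fin d → ℝ) → ℝ)
    (hQ : Differentiable ℝ Q) (hconv : ConvexOn ℝ Set.univ Q)
    (F Fbar : Finset (Fin d)) (xbar x : Fin d → ℝ)
    (hsupp : ∀ i ∉ Fbar, xbar i = 0)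
    (hxF : ∀ i ∉ F, x i = 0)
    (hxmin : ∀ z : Fin d → ℝ, (∀ i ∉ F, z i = 0) → Q x ≤ Q z)
    (ρm : ℝ) (hρm : 0 < ρm)
    (hlower : ∀ u v : Fin d → ℝ, l0 (u - v) ≤ s →
      ρm * (l2 (u - v)) ^ 2 ≤ Q v - Q u - fderiv ℝ Q u (v - u))
    (ε : ℝ) (hεnn : 0 ≤ ε)
    (hε : ∀ u : Fin d → ℝ, l0 u ≤ s → |fderiv ℝ Q xbar u| ≤ ε * l2 u)
    (hscard : (F ∪ Fbar).card ≤ s) :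
    ρm * (l2 (x - xbar)) ^ 2 ≤ 2 * (Q x - Q xbar) + ε ^ 2 / ρm := by
  have hsub : ∀ w : Fin d → ℝ, (∀ i ∉ F ∪ Fbar, w i = 0) → l0 w ≤ s := by
    intro w hw
    refine le_trans ?_ hscard
    apply Finset.card_le_card
    intro i hi
    simp only [Finset.mem_filter, Finset.mem_univ, true_and] at hi
    by_contra h
    exact hi (hw i h)
  have hz : ∀ i ∉ F ∪ Fbar, (x - xbar) i = 0 := by
    intro i hi
    simp only [Finset.mem_union, not_or] at hi
    simp [hxF i hi.1, hsupp i hi.2]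
  have hz' : ∀ i ∉ F ∪ Fbar, (xbar - x) i = 0 := by
    intro i hi
    simp only [Finset.mem_union, not_or] at hi
    simp [Pi.sub_apply, hxF i hi.1, hsupp i hi.2]
  have hl0 : l0 (x - xbar) ≤ s := hsub _ hz
  have hl0' : l0 (xbar - x) ≤ s := hsub _ hz'
  have h1 := hlower xbar x hl0'
  have h2 := hε (x - xbar) hl0
  have hl2eq : l2 (xbar - x) = l2 (x - xbar) := by
    unfold l2
    congr 1
    apply Finset.sum_congr rfl
    intro i _
    simp only [Pi.sub_apply]
    ring
  rw [hl2eq] at h1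
  set t := l2 (x - xbar) with ht
  have htnn : 0 ≤ t := Real.sqrt_nonneg _
  have habs := abs_le.mp h2
  have hfinal : ρm * t ^ 2 - 2 * (Q x - Q xbar) ≤ ε ^ 2 / ρm := by
    rw [le_div_iff₀ hρm]
    nlinarith [sq_nonneg (ρm * t - ε)]
  linarith
end
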